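/- Let F : Ordinal → Ordinal be any function, let α, β be ordinals < ε(Ω), and let η, ξ be any ordinals. Then F^β(η) < F^α(ξ) holds if one of the following holds: (1) β < α and K_Ω β ∪ {η} < F^α(ξ); (2) α ≤ β and F^β(η) ≤ ζ for some ζ ∈ K_Ω α. -/

import Mathlib

open Ordinal

/-- The least ordinal `λ` with `Ω ^ λ = λ`. -/
noncomputable def epsOmega (Ω : Ordinal) : Ordinal := sInf {x : Ordinal | Ω ^ x = x}

/-- The set `K_Ω α` of coefficients of `α`, defined by recursion on `α` via the
base-`Ω` Cantor normal form: `K_Ω α = {β₁,…,β_l} ∪ K_Ω α₁ ∪ ⋯ ∪ K_Ω α_l`. -/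
noncomputable def KOmega (Ω : Ordinal) : Ordinal → Set Ordinal :=
  WellFounded.fix Ordinal.lt_wf fun α IH =>
    {β | ∃ p ∈ Ordinal.CNF Ω α, p.2 = β} ∪
    {β | ∃ p ∈ Ordinal.CNF Ω α, ∃ h : p.1 < α, β ∈ IH p.1 h}

/-- The hierarchy `F^α`: `F^0 ξ = F ξ`, and for `α > 0`, `F^α ξ` is the least `γ` with
`ω^γ = γ`, `K_Ω α ∪ {ξ} < γ`, and `F^β η < γ` for all `η < γ` and `β < α` with `K_Ω β < γ`. -/
noncomputable def Hier (Ω : Ordinal) (F : Ordinal → Ordinal) : Ordinal → Ordinal → Ordinal :=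
  WellFounded.fix Ordinal.lt_wf fun α IH =>
    if _ : α = 0 then F
    else fun ξ => sInf {γ : Ordinal | omega0 ^ γ = γ ∧ (∀ x ∈ KOmega Ω α, x < γ) ∧ ξ < γ ∧
      ∀ η < γ, ∀ β, ∀ hβ : β < α, (∀ x ∈ KOmega Ω β, x < γ) → IH β hβ η < γ}

lemma KOmega_eq (Ω α : Ordinal) : KOmega Ω α =
    {β | ∃ p ∈ Ordinal.CNF Ω α, p.2 = β} ∪
    {β | ∃ p ∈ Ordinal.CNF Ω α, ∃ _ : p.1 < α, β ∈ KOmega Ω p.1} :=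
  WellFounded.fix_eq ..

lemma KOmega_zero (Ω : Ordinal) : KOmega Ω 0 = ∅ := by
  rw [KOmega_eq]
  simp [Ordinal.CNF.zero_right]

lemma KOmega_lt_Omega {Ω : Ordinal} (hΩ : 1 < Ω) (α : Ordinal) :
    ∀ x ∈ KOmega Ω α, x < Ω := by
  induction α using Ordinal.induction with
  | _ α IH =>
    intro x hx
    rw [KOmega_eq] at hx
    rcases hx with ⟨p, hp, rfl⟩ | ⟨p, hp, h1, hmem⟩
    · exact Ordinal.CNF.snd_lt hΩ hp
    · exact IH p.1 h1 x hmem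

lemma Hier_eq {Ω : Ordinal} (F : Ordinal → Ordinal) {α : Ordinal} (hα : α ≠ 0) (ξ : Ordinal) :
    Hier Ω F α ξ = sInf {γ : Ordinal | omega0 ^ γ = γ ∧ (∀ x ∈ KOmega Ω α, x < γ) ∧ ξ < γ ∧
      ∀ η < γ, ∀ β, ∀ _ : β < α, (∀ x ∈ KOmega Ω β, x < γ) → Hier Ω F β η < γ} := by
  have h := congrFun (WellFounded.fix_eq Ordinal.lt_wf
    (fun α IH =>
      if _ : α = 0 then F
      else fun ξ => sInf {γ : Ordinal | omega0 ^ γ = γ ∧ (∀ x ∈ KOmega Ω α, x < γ) ∧ ξ < γ ∧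
        ∀ η < γ, ∀ β, ∀ hβ : β < α, (∀ x ∈ KOmega Ω β, x < γ) → IH β hβ η < γ}) α) ξ
  rw [dif_neg hα] at h
  exact h

lemma hierSet_nonempty {Ω : Ordinal} (hΩ : 1 < Ω) (F : Ordinal → Ordinal) (α ξ : Ordinal) :
    ({γ : Ordinal | omega0 ^ γ = γ ∧ (∀ x ∈ KOmega Ω α, x < γ) ∧ ξ < γ ∧
      ∀ η < γ, ∀ β, ∀ _ : β < α, (∀ x ∈ KOmega Ω β, x < γ) →
        Hier Ω F β η < γ} : Set Ordinal).Nonempty := by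
  set e : Ordinal → Ordinal := fun x => nfp (omega0 ^ ·) x with he
  have he1 : ∀ x, omega0 ^ (e x) = e x := Ordinal.nfp_fp (isNormal_opow one_lt_omega0)
  have he2 : ∀ x, x ≤ e x := fun x => le_nfp _ x
  set g : Ordinal → Ordinal := fun δ =>
    e (max δ (max Ω (max ξ (⨆ p : Set.Iio α × Set.Iio δ, Hier Ω F p.1.1 p.2.1))) + 1) with hg
  have hlt : ∀ δ, δ < g δ := fun δ =>
    lt_of_lt_of_le (lt_of_le_of_lt (le_max_left _ _) (Order.lt_succ _)) (he2 _)
  have hΩle : ∀ δ, Ω < g δ := fun δ =>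
    lt_of_lt_of_le (lt_of_le_of_lt ((le_max_left _ _).trans (le_max_right _ _))
      (Order.lt_succ _)) (he2 _)
  have hξle : ∀ δ, ξ < g δ := fun δ =>
    lt_of_lt_of_le (lt_of_le_of_lt (((le_max_left _ _).trans (le_max_right _ _)).trans
      (le_max_right _ _)) (Order.lt_succ _)) (he2 _)
  have hclos : ∀ δ, ∀ η < δ, ∀ β < α, Hier Ω F β η < g δ := by
    intro δ η hη β hβ
    have h1 : Hier Ω F β η ≤ ⨆ p : Set.Iio α × Set.Iio δ, Hier Ω F p.1.1 p.2.1 :=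
      Ordinal.le_iSup (fun p : Set.Iio α × Set.Iio δ => Hier Ω F p.1.1 p.2.1)
        (⟨β, hβ⟩, ⟨η, hη⟩)
    exact lt_of_le_of_lt (h1.trans (((le_max_right _ _).trans (le_max_right _ _)).trans
      (le_max_right _ _))) (lt_of_lt_of_le (Order.lt_succ _) (he2 _))
  set s : ℕ → Ordinal := fun n => g^[n + 1] 0 with hs
  have hssucc : ∀ n, s (n + 1) = g (s n) := fun n => Function.iterate_succ_apply' g (n + 1) 0
  have hfix : ∀ n, omega0 ^ (s n) = s n := by
    intro n
    have : s n = g (g^[n] 0) := Function.iterate_succ_apply' g n 0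
    rw [this]
    exact he1 _
  refine ⟨⨆ n, s n, ?_, ?_, ?_, ?_⟩
  · rw [(isNormal_opow one_lt_omega0).map_iSup (Ordinal.bddAbove_range s)]
    exact iSup_congr hfix
  · intro x hx
    exact lt_of_lt_of_le (lt_trans (KOmega_lt_Omega hΩ α x hx) (hΩle 0)) (Ordinal.le_iSup s 0)
  · exact lt_of_lt_of_le (hξle 0) (Ordinal.le_iSup s 0)
  · intro η hη β hβ _
    obtain ⟨n, hn⟩ := Ordinal.lt_iSup_iff.1 hη
    have := hclos (s n) η hn β hβ
    rw [← hssucc n] at this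
    exact lt_of_lt_of_le this (Ordinal.le_iSup s (n + 1))

/-- F^β(η) < F^α(ξ) holds if either (1) β < α and K_Ω β ∪ {η} < F^α(ξ), or
(2) α ≤ β and F^β(η) ≤ ζ for some ζ ∈ K_Ω α. -/
theorem stmt1 (Ω : Ordinal) (hΩ : 1 < Ω) (F : Ordinal → Ordinal) (α β : Ordinal)
    (hα : α < epsOmega Ω) (hβ : β < epsOmega Ω) (η ξ : Ordinal)
    (h : (β < α ∧ (∀ x ∈ KOmega Ω β, x < Hier Ω F α ξ) ∧ η < Hier Ω F α ξ) ∨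
         (α ≤ β ∧ ∃ ζ ∈ KOmega Ω α, Hier Ω F β η ≤ ζ)) :
    Hier Ω F β η < Hier Ω F α ξ := by
  rcases h with ⟨h1, h2, h3⟩ | ⟨h1, ζ, hζ, h2⟩
  · have hα0 : α ≠ 0 := fun h0 => absurd (h0 ▸ h1) (by simp : ¬ β < 0)
    have hmem := csInf_mem (hierSet_nonempty hΩ F α ξ)
    rw [Hier_eq F hα0 ξ] at h2 h3 ⊢
    exact hmem.2.2.2 η h3 β h1 h2
  · have hα0 : α ≠ 0 := by
      rintro rfl
      rw [KOmega_zero] at hζ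
      exact hζ
    have hmem := csInf_mem (hierSet_nonempty hΩ F α ξ)
    rw [Hier_eq F hα0 ξ]
    exact lt_of_le_of_lt h2 (hmem.2.1 ζ hζ)
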